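/- For all real t with 0 ≤ t < 1, F2(t) = ∑_{n=1}^∞ 4(n+1)t^{2n}/((2n-1)(2n+1)(2n+3)), where F2(t) = ((3t^4 - 2t^2 - 1)/(8t^3))·ln((1+t)/(1-t)) + 1/(4t^2) + 7/12 for 0<t<1 and F2(0)=0. -/

import Mathlib

noncomputable def F2 (t : ℝ) : ℝ :=
  if t = 0 then 0 else
    ((3*t^4 - 2*t^2 - 1)/(8*t^3)) * Real.log ((1+t)/(1-t)) + 1/(4*t^2) + 7/12

theorem stmt_8 (t : ℝ) (ht0 : 0 ≤ t) (ht1 : t < 1) :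
    F2 t = ∑' n : ℕ,
      4*((n:ℝ)+2) * t^(2*(n+1)) / ((2*(n:ℝ)+1)*(2*(n:ℝ)+3)*(2*(n:ℝ)+5)) := by
  rcases eq_or_lt_of_le ht0 with h0 | h0
  · simp [F2, ← h0, pow_succ]
  have htne : t ≠ 0 := ne_of_gt h0
  have habs : |t| < 1 := by rw [abs_of_pos h0]; exact ht1
  set D : ℝ := Real.log (1 + t) - Real.log (1 - t) with hD
  set f : ℕ → ℝ := fun n => t ^ (2 * n + 1) / (2 * (n : ℝ) + 1) with hf
  have h1 : HasSum f (D / 2) := by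
    have := (Real.hasSum_log_sub_log_of_abs_lt_one habs).div_const 2
    convert this using 2 with n
    · rfl
    have hne : (2 * (n : ℝ) + 1) ≠ 0 := by positivity
    simp only [hf]
    field_simp
  have h2 : HasSum (fun n => f (n + 1)) (D / 2 - t) := by
    have := (hasSum_nat_add_iff' (f := f) 1).mpr h1
    simpa [hf] using this
  have h3 : HasSum (fun n => f (n + 2)) (D / 2 - (t + t ^ 3 / 3)) := by
    have := (hasSum_nat_add_iff' (f := f) 2).mpr h1
    have hr : ∑ i ∈ Finset.range 2, f i = t + t ^ 3 / 3 := by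
      simp [hf, Finset.sum_range_succ]
      norm_num
    rwa [hr] at this
  have hcomb : HasSum (fun n : ℕ =>
      (3 / 4 * t) * f n - (1 / (2 * t)) * f (n + 1) - (1 / (4 * t ^ 3)) * f (n + 2))
      ((3 / 4 * t) * (D / 2) - (1 / (2 * t)) * (D / 2 - t)
        - (1 / (4 * t ^ 3)) * (D / 2 - (t + t ^ 3 / 3))) :=
    ((h1.mul_left _).sub (h2.mul_left _)).sub (h3.mul_left _)
  have heq : (fun n : ℕ =>
      (3 / 4 * t) * f n - (1 / (2 * t)) * f (n + 1) - (1 / (4 * t ^ 3)) * f (n + 2))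
      = fun n : ℕ => 4*((n:ℝ)+2) * t^(2*(n+1)) / ((2*(n:ℝ)+1)*(2*(n:ℝ)+3)*(2*(n:ℝ)+5)) := by
    funext n
    have c1 : (2 * (n : ℝ) + 1) ≠ 0 := by positivity
    have c2 : (2 * (n : ℝ) + 3) ≠ 0 := by positivity
    have c3 : (2 * (n : ℝ) + 5) ≠ 0 := by positivity
    simp only [hf]
    push_cast
    rw [show 2 * (n + 1) + 1 = 2 * n + 1 + 2 by ring,
        show 2 * (n + 2) + 1 = 2 * n + 1 + 4 by ring,
        show 2 * (n + 1) = 2 * n + 2 by ring]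
    have h23 : (2 * ((n : ℝ) + 1) + 1) = 2 * n + 3 := by ring
    have h25 : (2 * ((n : ℝ) + 2) + 1) = 2 * n + 5 := by ring
    rw [h23, h25]
    field_simp
    ring
  rw [heq] at hcomb
  rw [hcomb.tsum_eq, F2, if_neg htne]
  have hlog : Real.log ((1 + t) / (1 - t)) = D := by
    rw [hD, Real.log_div (by linarith) (by linarith)]
  rw [hlog]
  field_simp
  ring
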